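/- Let m be a prime, let s_0, …, s_{m−1} be independent random variables each uniform on {−1,1} (indexed by F_m = ℤ/mℤ), and let u ∈ F_m be nonzero. Then the random variables X_{x,u} = s_x · s_{x+u}, for x ranging over F_m \ {0}, are mutually independent. -/

import Mathlib

open MeasureTheory ProbabilityTheory Real Finset
open scoped ENNReal

/-- The sign sequence associated to a Boolean sequence: `s_i = ±1`. -/
noncomputable def sgn {m : ℕ} (ω : ZMod m → Bool) (i : ZMod m) : ℝ :=
  if ω i then 1 else -1

/-- Autocorrelation at shift `u`: `C_u(S) = ∑_{i ∈ F_m} s_i s_{i+u}`. -/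
noncomputable def corr (m : ℕ) [NeZero m] (u : ZMod m) (ω : ZMod m → Bool) : ℝ :=
  ∑ i : ZMod m, sgn ω i * sgn ω (i + u)

/-- Periodic autocorrelation: `C(S) = max_{u ≠ 0} |C_u(S)|`. -/
noncomputable def pac (m : ℕ) [NeZero m] (ω : ZMod m → Bool) : ℝ :=
  ⨆ u : {u : ZMod m // u ≠ 0}, |corr m u ω|

/-- The uniform probability measure on `{−1,1}^m`, encoded via Boolean sequences. -/
noncomputable def unif (m : ℕ) [NeZero m] : Measure (ZMod m → Bool) :=
  (PMF.uniformOfFintype (ZMod m → Bool)).toMeasure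

section Aux

variable (m : ℕ) [Fact (Nat.Prime m)] (u : ZMod m)

/-- Auxiliary bijection recording `ω 0` together with the "equality pattern" at shift `u`. -/
def Phi (ω : ZMod m → Bool) : Bool × ({x : ZMod m // x ≠ 0} → Bool) :=
  (ω 0, fun x => ω x.val == ω (x.val + u))

lemma Phi_injective (hu : u ≠ 0) : Function.Injective (Phi m u) := by
  intro ω ω' h
  have h0 : ω 0 = ω' 0 := congrArg Prod.fst h
  have h1 : ∀ x : {x : ZMod m // x ≠ 0},
      (ω x.val == ω (x.val + u)) = (ω' x.val == ω' (x.val + u)) := fun x =>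
    congrFun (congrArg Prod.snd h) x
  have key : ∀ k : ℕ, ω (-(k : ZMod m) * u) = ω' (-(k : ZMod m) * u) := by
    intro k
    induction k with
    | zero => simpa using h0
    | succ k ih =>
      by_cases hk : ((k + 1 : ℕ) : ZMod m) = 0
      · rw [hk]; simpa using h0
      · have hxne : -((k + 1 : ℕ) : ZMod m) * u ≠ 0 :=
          mul_ne_zero (neg_ne_zero.2 hk) hu
        have hxu : -((k + 1 : ℕ) : ZMod m) * u + u = -(k : ZMod m) * u := by
          push_cast; ring
        have h2 := h1 ⟨_, hxne⟩
        simp only [hxu] at h2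
        rw [ih] at h2
        push_cast at h2 ⊢
        cases hA : ω (-((k : ZMod m) + 1) * u) <;>
          cases hB : ω' (-((k : ZMod m) + 1) * u) <;>
          cases hC : ω' (-(k : ZMod m) * u) <;> simp_all
  funext z
  obtain ⟨k, hk⟩ : ∃ k : ℕ, -(k : ZMod m) * u = z := by
    refine ⟨(-z * u⁻¹).val, ?_⟩
    have hv : (((-z * u⁻¹).val : ℕ) : ZMod m) = -z * u⁻¹ :=
      ZMod.natCast_rightInverse _
    rw [hv]
    field_simp
  rw [← hk]; exact key k

lemma card_nonzero : Fintype.card {x : ZMod m // x ≠ 0} = m - 1 := by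
  calc Fintype.card {x : ZMod m // x ≠ 0}
      = Fintype.card (ZMod m) - 1 := by
        rw [Fintype.card_subtype_compl, Fintype.card_subtype_eq (0 : ZMod m)]
    _ = m - 1 := by rw [ZMod.card]

lemma Phi_bijective (hu : u ≠ 0) : Function.Bijective (Phi m u) := by
  rw [Fintype.bijective_iff_injective_and_card]
  refine ⟨Phi_injective m u hu, ?_⟩
  have hm : 1 ≤ m := (Fact.out : m.Prime).one_lt.le
  simp only [Fintype.card_prod, Fintype.card_fun, Fintype.card_bool, ZMod.card, card_nonzero m]
  rw [← pow_succ']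
  congr 1
  omega

lemma unif_apply (s : Set (ZMod m → Bool)) :
    unif m s = (Nat.card s : ℝ≥0∞) / 2 ^ m := by
  classical
  rw [unif, PMF.toMeasure_uniformOfFintype_apply _ (Set.to_countable s).measurableSet,
    Nat.card_eq_fintype_card]
  congr 1
  simp [Fintype.card_fun, ZMod.card]

lemma meas_inter (hu : u ≠ 0) (S : Finset {x : ZMod m // x ≠ 0})
    (sets : ∀ _x : {x : ZMod m // x ≠ 0}, Set Bool) :
    unif m (⋂ x ∈ S, (fun ω : ZMod m → Bool => (ω x.val == ω (x.val + u))) ⁻¹' sets x)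
      = (∏ x ∈ S, (Nat.card (sets x) : ℝ≥0∞)) / 2 ^ S.card := by
  classical
  have hset : (⋂ x ∈ S, (fun ω : ZMod m → Bool => (ω x.val == ω (x.val + u))) ⁻¹' sets x)
      = Phi m u ⁻¹'
        (Set.univ ×ˢ Set.pi Set.univ (fun x => if x ∈ S then sets x else Set.univ)) := by
    ext ω
    simp only [Set.mem_iInter, Set.mem_preimage, Set.mem_prod, Set.mem_univ, true_and,
      Set.mem_pi, Phi]
    constructor
    · intro h x _
      split_ifs with hx
      · exact h x hx
      · trivial
    · intro h x hx
      have := h x (Set.mem_univ x)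
      rwa [if_pos hx] at this
  have hb := Phi_bijective m u hu
  rw [hset, unif_apply,
    Nat.card_preimage_of_injective hb.injective
      (by rw [hb.surjective.range_eq]; exact Set.subset_univ _),
    Nat.card_congr (Equiv.Set.prod _ _), Nat.card_prod,
    Nat.card_congr (Equiv.Set.univ Bool), Nat.card_congr (Equiv.Set.univPi _), Nat.card_pi]
  have h2 : Nat.card Bool = 2 := by simp [Nat.card_eq_fintype_card]
  have hprod : (∏ x : {x : ZMod m // x ≠ 0},
        Nat.card ↥(if x ∈ S then sets x else (Set.univ : Set Bool)))
      = (∏ x ∈ S, Nat.card (sets x)) * 2 ^ (m - 1 - S.card) := by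
    rw [← Finset.prod_mul_prod_compl S]
    congr 1
    · exact Finset.prod_congr rfl fun x hx => by rw [if_pos hx]
    · have hc : ∀ x ∈ Sᶜ, Nat.card ↥(if x ∈ S then sets x else Set.univ) = 2 := by
        intro x hx
        rw [if_neg (Finset.mem_compl.mp hx)]
        simpa [h2] using Nat.card_congr (Equiv.Set.univ Bool)
      rw [Finset.prod_congr rfl hc, Finset.prod_const, Finset.card_compl, card_nonzero]
  rw [h2, hprod]
  have hm : 1 ≤ m := (Fact.out : m.Prime).one_lt.le
  have hSle : S.card ≤ m - 1 := by
    have := Finset.card_le_univ S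
    rwa [card_nonzero m] at this
  push_cast
  have hsplit : (2 : ℝ≥0∞) ^ m = (2 * 2 ^ (m - 1 - S.card)) * 2 ^ S.card := by
    rw [← pow_succ', ← pow_add]
    congr 1
    omega
  have hre : (2 : ℝ≥0∞) * ((∏ x ∈ S, (Nat.card (sets x) : ℝ≥0∞)) * 2 ^ (m - 1 - S.card))
      = (2 * 2 ^ (m - 1 - S.card)) * ∏ x ∈ S, (Nat.card (sets x) : ℝ≥0∞) := by ring
  rw [hre, hsplit]
  exact ENNReal.mul_div_mul_left _ _
    (mul_ne_zero two_ne_zero (pow_ne_zero _ two_ne_zero))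
    (ENNReal.mul_ne_top ENNReal.ofNat_ne_top (ENNReal.pow_ne_top ENNReal.ofNat_ne_top))

lemma indepY (hu : u ≠ 0) :
    iIndepFun
      (fun x : {x : ZMod m // x ≠ 0} => fun ω : ZMod m → Bool => (ω x.val == ω (x.val + u)))
      (unif m) := by
  rw [iIndepFun_iff_measure_inter_preimage_eq_mul]
  intro S sets _
  rw [meas_inter m u hu S sets]
  have hone : ∀ x : {x : ZMod m // x ≠ 0},
      unif m ((fun ω : ZMod m → Bool => (ω x.val == ω (x.val + u))) ⁻¹' sets x)
        = (Nat.card (sets x) : ℝ≥0∞) / 2 := by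
    intro x
    simpa using meas_inter m u hu {x} sets
  rw [Finset.prod_congr rfl fun x _ => hone x]
  simp [div_eq_mul_inv, Finset.prod_mul_distrib, Finset.prod_const, ENNReal.inv_pow]

end Aux

/-- For `m` prime and `u ≠ 0`, the random variables `X_{x,u} = s_x s_{x+u}`,
for `x` ranging over the nonzero elements of `F_m`, are mutually independent. -/
theorem stmt_2 (m : ℕ) [Fact (Nat.Prime m)] (u : ZMod m) (hu : u ≠ 0) :
    iIndepFun
      (fun x : {x : ZMod m // x ≠ 0} => fun ω : ZMod m → Bool => sgn ω x.val * sgn ω (x.val + u))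
      (unif m) := by
  have heq : (fun x : {x : ZMod m // x ≠ 0} =>
        fun ω : ZMod m → Bool => sgn ω x.val * sgn ω (x.val + u))
      = fun x : {x : ZMod m // x ≠ 0} =>
        (fun b : Bool => if b then (1 : ℝ) else -1) ∘
          (fun ω : ZMod m → Bool => (ω x.val == ω (x.val + u))) := by
    funext x ω
    simp only [Function.comp_apply, sgn]
    cases ω x.val <;> cases ω (x.val + u) <;> norm_num
  rw [heq]
  exact (indepY m u hu).comp _ (fun _ => measurable_of_countable _)
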